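/- arXiv:2406.18163 — 6 statements merged into one kernel-verified Lean document; each statement's English description precedes it below -/
import Mathlib

section
/- Let N ≥ 3, let θ : Fin N → ℝ be a cyclic sequence of angles with 0 < θ i < 2π for all i, let ℓ : Fin N → ℝ satisfy ℓ i > 0 for all i, let Per := ∑ i, ℓ i, and let A > 0 be a real number. If for every i (indices taken cyclically mod N) one has ψ(θ i) = ψ(θ (i+1)) and (1/ℓ i) · (ψ(θ i) + ψ(θ (i+1))) = Per/(2·A), then the sequence ℓ is constant and the sequence θ is constant (i.e., ℓ i = ℓ j and θ i = θ j for all i, j). -/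
/-- `ψ(θ) = 1/sin θ + cos θ/sin θ` (equals `cot(θ/2)` on `(0, 2π)`). -/
noncomputable def psi (θ : ℝ) : ℝ := 1 / Real.sin θ + Real.cos θ / Real.sin θ

lemma psi_eq_half {t : ℝ} (h0 : 0 < t) (h2 : t < 2 * Real.pi) :
    psi t = Real.cos (t / 2) / Real.sin (t / 2) := by
  have hsin : Real.sin t = 2 * Real.sin (t / 2) * Real.cos (t / 2) := by
    have := Real.sin_two_mul (t / 2)
    rw [show 2 * (t / 2) = t by ring] at this
    linarith
  have hcos : Real.cos t = 2 * Real.cos (t / 2) ^ 2 - 1 := by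
    have h := Real.cos_sq (t / 2)
    rw [show 2 * (t / 2) = t by ring] at h
    linarith
  have hs2 : 0 < Real.sin (t / 2) :=
    Real.sin_pos_of_pos_of_lt_pi (by linarith) (by linarith)
  by_cases hc : Real.cos (t / 2) = 0
  · simp [psi, hsin, hc, hcos]
  · have hst : Real.sin t ≠ 0 := by
      rw [hsin]
      exact mul_ne_zero (mul_ne_zero two_ne_zero hs2.ne') hc
    rw [psi, ← add_div, hsin, hcos]
    field_simp
    ring

lemma psi_inj {a b : ℝ} (ha0 : 0 < a) (ha2 : a < 2 * Real.pi)
    (hb0 : 0 < b) (hb2 : b < 2 * Real.pi) (h : psi a = psi b) : a = b := by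
  rw [psi_eq_half ha0 ha2, psi_eq_half hb0 hb2] at h
  have hsa : 0 < Real.sin (a / 2) :=
    Real.sin_pos_of_pos_of_lt_pi (by linarith) (by linarith)
  have hsb : 0 < Real.sin (b / 2) :=
    Real.sin_pos_of_pos_of_lt_pi (by linarith) (by linarith)
  have hcross : Real.cos (a / 2) * Real.sin (b / 2)
      = Real.cos (b / 2) * Real.sin (a / 2) := by
    field_simp at h
    linarith
  have hzero : Real.sin (a / 2 - b / 2) = 0 := by
    rw [Real.sin_sub]; linarith [hcross]
  rw [Real.sin_eq_zero_iff] at hzero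
  obtain ⟨n, hn⟩ := hzero
  have hpi := Real.pi_pos
  have hrange : -Real.pi < a / 2 - b / 2 ∧ a / 2 - b / 2 < Real.pi := by
    constructor <;> linarith
  have hn0 : n = 0 := by
    rcases lt_trichotomy n 0 with h' | h' | h'
    · exfalso
      have hn1 : n ≤ -1 := by omega
      have : (n : ℝ) ≤ -1 := by exact_mod_cast hn1
      nlinarith [hrange.1, hn]
    · exact h'
    · exfalso
      have : (1 : ℝ) ≤ (n : ℝ) := by exact_mod_cast h'
      nlinarith [hrange.2, hn]
  rw [hn0] at hn
  simp at hn
  linarith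

/-- Alexandrov's theorem for polygons (sliding & tilting stationarity conditions),
abstract form: the side lengths and interior angles are constant, i.e. the
polygon is regular. -/
theorem alexandrov_polygon_sliding_tilting_abstract
    (N : ℕ) (hN : 3 ≤ N) [NeZero N]
    (θ ℓ : Fin N → ℝ)
    (hθ : ∀ i, 0 < θ i ∧ θ i < 2 * Real.pi)
    (hℓ : ∀ i, 0 < ℓ i)
    (A : ℝ) (hA : 0 < A)
    (Per : ℝ) (hPer : Per = ∑ i, ℓ i)
    (htilt : ∀ i : Fin N, psi (θ i) = psi (θ (i + 1)))
    (hslide : ∀ i : Fin N, (1 / ℓ i) * (psi (θ i) + psi (θ (i + 1))) = Per / (2 * A)) :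
    (∀ i j, ℓ i = ℓ j) ∧ (∀ i j, θ i = θ j) := by
  -- psi ∘ θ is constant
  open Fin.NatCast in
  have hconst : ∀ i : Fin N, psi (θ i) = psi (θ 0) := by
    have key : ∀ n : ℕ, psi (θ ((n : Fin N))) = psi (θ 0) := by
      intro n
      induction n with
      | zero => simp
      | succ m ih =>
        have : ((m + 1 : ℕ) : Fin N) = (m : Fin N) + 1 := by
          push_cast; ring
        rw [this, ← htilt (m : Fin N), ih]
    intro i
    have := key i.val
    rwa [Fin.cast_val_eq_self] at this
  -- θ is constant
  have hθconst : ∀ i j, θ i = θ j := by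
    intro i j
    exact psi_inj (hθ i).1 (hθ i).2 (hθ j).1 (hθ j).2
      ((hconst i).trans (hconst j).symm)
  -- Per positive
  have hPerpos : 0 < Per := by
    rw [hPer]
    exact Finset.sum_pos (fun i _ => hℓ i) Finset.univ_nonempty
  -- ℓ constant
  have hℓconst : ∀ i j, ℓ i = ℓ j := by
    intro i j
    have hi := hslide i
    have hj := hslide j
    rw [hconst i, hconst (i + 1)] at hi
    rw [hconst j, hconst (j + 1)] at hj
    have hR : 0 < Per / (2 * A) := by positivity
    set c := psi (θ 0)
    have hci : (1 / ℓ i) * (c + c) = Per / (2 * A) := hi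
    have hcj : (1 / ℓ j) * (c + c) = Per / (2 * A) := hj
    have hli := (hℓ i).ne'
    have hlj := (hℓ j).ne'
    field_simp at hci hcj
    have : Per * ℓ i = Per * ℓ j := by linarith
    exact mul_left_cancel₀ hPerpos.ne' this
  exact ⟨hℓconst, hθconst⟩
end

section
/- Let N ≥ 3 and let P : Fin N → ℝ² (indices cyclic mod N) be such that for every i the three points P (i−1), P i, P (i+1) are affinely independent. Set ℓ i := dist(P i, P (i+1)), θ i := ∠(P (i−1), P i, P (i+1)) (the unsigned Euclidean angle at P i), Per := ∑ i, ℓ i, and let A := (1/2) · ∑ i, ((P i).1 · (P (i+1)).2 − (P (i+1)).1 · (P i).2) be the shoelace quantity, and assume A > 0. If for every i one has ψ(θ i) = ψ(θ (i+1)) and (1/ℓ i) · (ψ(θ i) + ψ(θ (i+1))) = Per/(2·A), then ℓ i = ℓ j and θ i = θ j for all i, j. -/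
open EuclideanGeometry

lemma psi_cos {a : ℝ} (ha0 : 0 < a) (haπ : a < Real.pi) :
    Real.cos a = ((psi a) ^ 2 - 1) / ((psi a) ^ 2 + 1) := by
  have hs : 0 < Real.sin a := Real.sin_pos_of_pos_of_lt_pi ha0 haπ
  have hc : -1 < Real.cos a := by
    have := Real.cos_lt_cos_of_nonneg_of_le_pi (le_of_lt ha0) le_rfl haπ
    simpa [Real.cos_pi] using this
  have hpsi : psi a * Real.sin a = 1 + Real.cos a := by
    unfold psi; field_simp
  have hsq : Real.sin a ^ 2 = 1 - Real.cos a ^ 2 := by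
    have := Real.sin_sq_add_cos_sq a; nlinarith
  have h1 : (1 + Real.cos a) = psi a ^ 2 * (1 - Real.cos a) := by
    have h2 : (1 + Real.cos a) ^ 2 = psi a ^ 2 * ((1 - Real.cos a) * (1 + Real.cos a)) := by
      nlinarith [hpsi, hsq]
    have hpos : 0 < 1 + Real.cos a := by linarith
    nlinarith [h2, hpos]
  have hden : (0:ℝ) < psi a ^ 2 + 1 := by positivity
  field_simp
  nlinarith [h1]

/-- Alexandrov's theorem for polygons (sliding & tilting stationarity conditions),
geometric form: a polygon whose side lengths `ℓ`, interior angles `θ`, perimeter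
`Per` and shoelace area `A` satisfy the two stationarity conditions on every side
is equilateral and equiangular, i.e. regular. -/
theorem alexandrov_polygon_sliding_tilting
    (N : ℕ) (hN : 3 ≤ N) [NeZero N]
    (P : Fin N → EuclideanSpace ℝ (Fin 2))
    (hindep : ∀ i : Fin N, AffineIndependent ℝ ![P (i - 1), P i, P (i + 1)])
    (θ ℓ : Fin N → ℝ)
    (hθ : ∀ i : Fin N, θ i = ∠ (P (i - 1)) (P i) (P (i + 1)))
    (hℓ : ∀ i : Fin N, ℓ i = dist (P i) (P (i + 1)))
    (Per : ℝ) (hPer : Per = ∑ i, ℓ i)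
    (A : ℝ)
    (hA : A = (1 / 2) * ∑ i : Fin N, (P i 0 * P (i + 1) 1 - P (i + 1) 0 * P i 1))
    (hApos : 0 < A)
    (htilt : ∀ i : Fin N, psi (θ i) = psi (θ (i + 1)))
    (hslide : ∀ i : Fin N, (1 / ℓ i) * (psi (θ i) + psi (θ (i + 1))) = Per / (2 * A)) :
    (∀ i j, ℓ i = ℓ j) ∧ (∀ i j, θ i = θ j) := by
  -- angles are in (0, π)
  have hθrange : ∀ i : Fin N, 0 < θ i ∧ θ i < Real.pi := by
    intro i
    have hnc : ¬ Collinear ℝ {P (i - 1), P i, P (i + 1)} :=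
      affineIndependent_iff_not_collinear_set.mp (hindep i)
    have h0 : θ i ≠ 0 := by
      rw [hθ i]; intro h; exact hnc (collinear_of_angle_eq_zero h)
    have hπ : θ i ≠ Real.pi := by
      rw [hθ i]; intro h; exact hnc (collinear_of_angle_eq_pi h)
    have h1 : 0 ≤ θ i := by rw [hθ i]; exact angle_nonneg _ _ _
    have h2 : θ i ≤ Real.pi := by rw [hθ i]; exact angle_le_pi _ _ _
    exact ⟨lt_of_le_of_ne h1 (Ne.symm h0), lt_of_le_of_ne h2 hπ⟩
  -- side lengths are positive
  have hℓpos : ∀ i : Fin N, 0 < ℓ i := by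
    intro i
    have hne : P i ≠ P (i + 1) := by
      intro h
      have := (hindep i).injective (a₁ := 1) (a₂ := 2) (by simpa using h)
      simp at this
    rw [hℓ i]; exact dist_pos.mpr hne
  -- all psi values are equal
  have hpsiconst : ∀ i : Fin N, psi (θ i) = psi (θ 0) := by
    open Fin.NatCast in
    have key : ∀ n : ℕ, psi (θ (n : Fin N)) = psi (θ 0) := by
      intro n
      induction n with
      | zero => simp
      | succ n ih =>
        have : ((n + 1 : ℕ) : Fin N) = (n : Fin N) + 1 := by push_cast; ring
        rw [this, ← htilt]; exact ih
    intro i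
    have := key i.val
    rwa [Fin.cast_val_eq_self] at this
  set c := psi (θ 0) with hc
  -- Per > 0
  have hPerpos : 0 < Per := by
    rw [hPer]
    exact Finset.sum_pos (fun i _ => hℓpos i) ⟨0, Finset.mem_univ 0⟩
  have hK : 0 < Per / (2 * A) := by positivity
  -- each ℓ i = 2 c / K
  have hℓeq : ∀ i : Fin N, ℓ i * (Per / (2 * A)) = 2 * c := by
    intro i
    have h := hslide i
    rw [hpsiconst i, hpsiconst (i + 1)] at h
    have hne : ℓ i ≠ 0 := ne_of_gt (hℓpos i)
    field_simp at h
    have hA2 : (2 * A) ≠ 0 := by positivity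
    field_simp
    linear_combination -h
  constructor
  · intro i j
    have := hℓeq i
    have := hℓeq j
    have hKne : Per / (2 * A) ≠ 0 := ne_of_gt hK
    have : ℓ i * (Per / (2 * A)) = ℓ j * (Per / (2 * A)) := by
      rw [hℓeq i, hℓeq j]
    exact mul_right_cancel₀ hKne this
  · intro i j
    have hi := hθrange i
    have hj := hθrange j
    have hcos : Real.cos (θ i) = Real.cos (θ j) := by
      rw [psi_cos hi.1 hi.2, psi_cos hj.1 hj.2, hpsiconst i, hpsiconst j]
    exact Real.injOn_cos ⟨le_of_lt hi.1, le_of_lt hi.2⟩ ⟨le_of_lt hj.1, le_of_lt hj.2⟩ hcos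
end

section
/- Let N ≥ 3 and let P : Fin N → ℝ² (indices cyclic mod N) be such that for every i the three points P (i−1), P i, P (i+1) are affinely independent. Set θ i := ∠(P (i−1), P i, P (i+1)) (the unsigned Euclidean angle at P i). Assume that for every i one has ψ(θ i) = ψ(θ (i+1)) and ∠(P i, P (i−1), P (i+1)) = ∠(P i, P (i+1), P (i−1)). Then dist(P i, P (i+1)) = dist(P j, P (j+1)) and θ i = θ j for all i, j. -/
open EuclideanGeometry Real

lemma psi_eq_cot_half {x : ℝ} (hx0 : 0 < x) (hxpi : x < Real.pi) :
    psi x = Real.cos (x / 2) / Real.sin (x / 2) := by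
  have h2 : 0 < x / 2 := by linarith
  have h2' : x / 2 < Real.pi / 2 := by linarith
  have hs : 0 < Real.sin (x / 2) :=
    Real.sin_pos_of_pos_of_lt_pi h2 (by linarith [Real.pi_pos])
  have hc : 0 < Real.cos (x / 2) := Real.cos_pos_of_mem_Ioo ⟨by linarith, h2'⟩
  have hsin : Real.sin x = 2 * Real.sin (x / 2) * Real.cos (x / 2) := by
    have := Real.sin_two_mul (x / 2)
    rw [show 2 * (x / 2) = x by ring] at this
    linarith
  have hcos : Real.cos (x / 2) ^ 2 = (1 + Real.cos x) / 2 := by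
    have := Real.cos_sq (x / 2)
    rw [show 2 * (x / 2) = x by ring] at this
    linarith
  have hsx : Real.sin x ≠ 0 := by rw [hsin]; positivity
  unfold psi
  rw [hsin]
  field_simp
  nlinarith [hcos]

lemma psi_inj_s2 {x y : ℝ} (hx0 : 0 < x) (hxpi : x < Real.pi) (hy0 : 0 < y)
    (hypi : y < Real.pi) (h : psi x = psi y) : x = y := by
  rw [psi_eq_cot_half hx0 hxpi, psi_eq_cot_half hy0 hypi] at h
  have hsx : 0 < Real.sin (x / 2) :=
    Real.sin_pos_of_pos_of_lt_pi (by linarith) (by linarith [Real.pi_pos])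
  have hsy : 0 < Real.sin (y / 2) :=
    Real.sin_pos_of_pos_of_lt_pi (by linarith) (by linarith [Real.pi_pos])
  have hcx : 0 < Real.cos (x / 2) := Real.cos_pos_of_mem_Ioo ⟨by linarith, by linarith⟩
  have hcy : 0 < Real.cos (y / 2) := Real.cos_pos_of_mem_Ioo ⟨by linarith, by linarith⟩
  have htan : Real.tan (x / 2) = Real.tan (y / 2) := by
    rw [Real.tan_eq_sin_div_cos, Real.tan_eq_sin_div_cos]
    field_simp at h ⊢
    nlinarith [h]
  have := Real.injOn_tan (Set.mem_Ioo.mpr ⟨by linarith [Real.pi_pos], by linarith⟩)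
    (Set.mem_Ioo.mpr ⟨by linarith [Real.pi_pos], by linarith⟩) htan
  linarith

open scoped Fin.NatCast Fin.CommRing in
lemma cyc_eq {α : Type*} {N : ℕ} [NeZero N] (f : Fin N → α)
    (h : ∀ i, f i = f (i + 1)) : ∀ i j, f i = f j := by
  have H : ∀ n : ℕ, f ((n : Fin N)) = f 0 := by
    intro n
    induction n with
    | zero => simp
    | succ n ih =>
      have : ((n + 1 : ℕ) : Fin N) = (n : Fin N) + 1 := by push_cast; ring
      rw [this, ← h]; exact ih
  intro i j
  have hi : ((i.val : ℕ) : Fin N) = i := Fin.cast_val_eq_self i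
  have hj : ((j.val : ℕ) : Fin N) = j := Fin.cast_val_eq_self j
  rw [← hi, ← hj, H, H]

/-- Alexandrov's theorem for polygons (tilting & vertex-moving stationarity
conditions): such a polygon is equilateral and equiangular, i.e. regular. -/
theorem alexandrov_polygon_tilting_moving
    (N : ℕ) (hN : 3 ≤ N) [NeZero N]
    (P : Fin N → EuclideanSpace ℝ (Fin 2))
    (hindep : ∀ i : Fin N, AffineIndependent ℝ ![P (i - 1), P i, P (i + 1)])
    (θ : Fin N → ℝ)
    (hθ : ∀ i : Fin N, θ i = ∠ (P (i - 1)) (P i) (P (i + 1)))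
    (htilt : ∀ i : Fin N, psi (θ i) = psi (θ (i + 1)))
    (hmove : ∀ i : Fin N, ∠ (P i) (P (i - 1)) (P (i + 1)) = ∠ (P i) (P (i + 1)) (P (i - 1))) :
    (∀ i j, dist (P i) (P (i + 1)) = dist (P j) (P (j + 1))) ∧ (∀ i j, θ i = θ j) := by
  have hnc : ∀ i : Fin N,
      ¬Collinear ℝ ({P (i - 1), P i, P (i + 1)} : Set (EuclideanSpace ℝ (Fin 2))) :=
    fun i => affineIndependent_iff_not_collinear_set.mp (hindep i)
  have hθ0 : ∀ i, 0 < θ i := fun i => by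
    rw [hθ i]; exact angle_pos_of_not_collinear (hnc i)
  have hθpi : ∀ i, θ i < Real.pi := fun i => by
    rw [hθ i]; exact angle_lt_pi_of_not_collinear (hnc i)
  constructor
  · -- equilateral
    apply cyc_eq
    intro j
    have key : dist (P (j + 1)) (P ((j + 1) - 1)) = dist (P (j + 1)) (P ((j + 1) + 1)) := by
      apply dist_eq_of_angle_eq_angle_of_angle_ne_pi (hmove (j + 1))
      exact angle_ne_pi_of_not_collinear (hnc (j + 1))
    have hsub : (j + 1) - 1 = j := by exact add_sub_cancel_right j 1
    rw [hsub, dist_comm (P (j + 1)) (P j)] at key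
    exact key
  · -- equiangular
    apply cyc_eq
    intro i
    exact psi_inj_s2 (hθ0 i) (hθpi i) (hθ0 (i + 1)) (hθpi (i + 1)) (htilt i)
end

section
/- Let a, b ∈ (0, π). Then the function g(t) := (sin b − sin t)/sin(b + t) + (sin a + sin t)/sin(a − t) is differentiable at t = 0 with g′(0) = (1/sin a + cos a/sin a) − (1/sin b + cos b/sin b) = ψ(a) − ψ(b). -/
/-- Calculus core of the tilting stationarity condition: for angles
`a, b ∈ (0, π)`, the function
`g(t) = (sin b − sin t)/sin(b + t) + (sin a + sin t)/sin(a − t)`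
is differentiable at `0` with derivative `ψ(a) − ψ(b)`. -/
theorem tilting_first_variation
    (a b : ℝ) (ha : a ∈ Set.Ioo 0 Real.pi) (hb : b ∈ Set.Ioo 0 Real.pi) :
    HasDerivAt
      (fun t : ℝ =>
        (Real.sin b - Real.sin t) / Real.sin (b + t) +
          (Real.sin a + Real.sin t) / Real.sin (a - t))
      ((1 / Real.sin a + Real.cos a / Real.sin a) -
        (1 / Real.sin b + Real.cos b / Real.sin b)) 0 ∧
    (1 / Real.sin a + Real.cos a / Real.sin a) -
        (1 / Real.sin b + Real.cos b / Real.sin b) = psi a - psi b := by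
  have hsa : Real.sin a ≠ 0 := ne_of_gt (Real.sin_pos_of_pos_of_lt_pi ha.1 ha.2)
  have hsb : Real.sin b ≠ 0 := ne_of_gt (Real.sin_pos_of_pos_of_lt_pi hb.1 hb.2)
  constructor
  · -- numerator/denominator derivatives
    have hn1 : HasDerivAt (fun t : ℝ => Real.sin b - Real.sin t) (-Real.cos 0) 0 :=
      (Real.hasDerivAt_sin 0).const_sub (Real.sin b)
    have hd1 : HasDerivAt (fun t : ℝ => Real.sin (b + t)) (Real.cos (b + 0) * 1) 0 :=
      (Real.hasDerivAt_sin (b + 0)).comp 0 ((hasDerivAt_id 0).const_add b)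
    have hn2 : HasDerivAt (fun t : ℝ => Real.sin a + Real.sin t) (Real.cos 0) 0 :=
      (Real.hasDerivAt_sin 0).const_add (Real.sin a)
    have hd2 : HasDerivAt (fun t : ℝ => Real.sin (a - t)) (Real.cos (a - 0) * (-1)) 0 :=
      (Real.hasDerivAt_sin (a - 0)).comp 0 ((hasDerivAt_id 0).const_sub a)
    have hsb0 : Real.sin (b + 0) ≠ 0 := by simpa using hsb
    have hsa0 : Real.sin (a - 0) ≠ 0 := by simpa using hsa
    have h1 := hn1.div hd1 hsb0
    have h2 := hn2.div hd2 hsa0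
    have h := h1.add h2
    refine h.congr_deriv ?_
    simp only [add_zero, sub_zero, Real.cos_zero, Real.sin_zero]
    field_simp
    ring
  · simp [psi]
end

section
/- Let A, B, C ∈ ℝ² (the Euclidean plane) with A ≠ B, B ≠ C and A ≠ C, and let u := (C − A)/‖C − A‖. Then the function t ↦ dist(A, B + t·u) + dist(B + t·u, C) is differentiable at t = 0 with derivative equal to cos(∠(B, A, C)) − cos(∠(B, C, A)). -/
open EuclideanGeometry InnerProductGeometry

lemma hasDerivAt_norm_aux {F : Type*} [NormedAddCommGroup F] [InnerProductSpace ℝ F]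
    {f : ℝ → F} {f' : F} {x : ℝ} (hf : HasDerivAt f f' x) (h0 : f x ≠ 0) :
    HasDerivAt (fun t => ‖f t‖) (inner ℝ (f x) f' / ‖f x‖) x := by
  have h1 : HasDerivAt (fun t => ‖f t‖ ^ 2) (2 * inner ℝ (f x) f') x := hf.norm_sq
  have h2 := h1.sqrt (pow_ne_zero 2 (norm_ne_zero_iff.2 h0))
  have h3 : (fun t => Real.sqrt (‖f t‖ ^ 2)) = fun t => ‖f t‖ := by
    ext t; rw [Real.sqrt_sq (norm_nonneg _)]
  rw [h3] at h2
  convert h2 using 1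
  rw [Real.sqrt_sq (norm_nonneg _)]
  ring

/-- First variation of the perimeter under the vertex-moving perturbation:
moving `B` in the unit direction `u` of `C − A`, the sum of the two adjacent
side lengths has derivative `cos ∠(B,A,C) − cos ∠(B,C,A)` at `t = 0`. -/
theorem vertex_moving_first_variation
    (A B C : EuclideanSpace ℝ (Fin 2))
    (hAB : A ≠ B) (hBC : B ≠ C) (hAC : A ≠ C) :
    HasDerivAt
      (fun t : ℝ =>
        dist A (B + t • (‖C - A‖⁻¹ • (C - A))) +
          dist (B + t • (‖C - A‖⁻¹ • (C - A))) C)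
      (Real.cos (∠ B A C) - Real.cos (∠ B C A)) 0 := by
  set u : EuclideanSpace ℝ (Fin 2) := ‖C - A‖⁻¹ • (C - A) with hu
  have hCA : C - A ≠ 0 := sub_ne_zero.2 (Ne.symm hAC)
  have hnCA : ‖C - A‖ ≠ 0 := norm_ne_zero_iff.2 hCA
  -- derivative of first term
  have hf1 : HasDerivAt (fun t : ℝ => A - (B + t • u)) (-u) 0 := by
    have : HasDerivAt (fun t : ℝ => t • u) u 0 := by
      simpa using (hasDerivAt_id (0:ℝ)).smul_const u
    simpa using ((this.const_add B).const_sub A)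
  have hf2 : HasDerivAt (fun t : ℝ => (B + t • u) - C) u 0 := by
    have : HasDerivAt (fun t : ℝ => t • u) u 0 := by
      simpa using (hasDerivAt_id (0:ℝ)).smul_const u
    simpa using ((this.const_add B).sub_const C)
  have h01 : (fun t : ℝ => A - (B + t • u)) 0 ≠ 0 := by
    simpa using sub_ne_zero.2 hAB
  have h02 : (fun t : ℝ => (B + t • u) - C) 0 ≠ 0 := by
    simpa using sub_ne_zero.2 hBC
  have H1 := hasDerivAt_norm_aux hf1 h01
  have H2 := hasDerivAt_norm_aux hf2 h02
  have H : HasDerivAt (fun t : ℝ => ‖A - (B + t • u)‖ + ‖(B + t • u) - C‖) _ 0 := H1.add H2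
  have heq : (fun t : ℝ => ‖A - (B + t • u)‖ + ‖(B + t • u) - C‖) =
      (fun t : ℝ =>
        dist A (B + t • u) + dist (B + t • u) C) := by
    ext t; rw [dist_eq_norm, dist_eq_norm]
  rw [heq] at H
  convert H using 1
  have e1 : Real.cos (∠ B A C) = inner ℝ (B - A) (C - A) / (‖B - A‖ * ‖C - A‖) := by
    rw [EuclideanGeometry.angle, InnerProductGeometry.cos_angle]
    simp [vsub_eq_sub]
  have e2 : Real.cos (∠ B C A) = inner ℝ (B - C) (A - C) / (‖B - C‖ * ‖A - C‖) := by
    rw [EuclideanGeometry.angle, InnerProductGeometry.cos_angle]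
    simp [vsub_eq_sub]
  simp only [zero_smul, add_zero, hu] at *
  rw [e1, e2]
  rw [inner_neg_right, inner_smul_right, inner_smul_right]
  have i1 : (inner ℝ (A - B) (C - A) : ℝ) = - inner ℝ (B - A) (C - A) := by
    rw [← inner_neg_left]; congr 1; abel
  have i2 : (inner ℝ (B - C) (C - A) : ℝ) = - inner ℝ (B - C) (A - C) := by
    rw [← inner_neg_right]; congr 1; abel
  rw [i1, i2]
  have nAB : ‖A - B‖ = ‖B - A‖ := by rw [norm_sub_rev]
  have nAC : ‖C - A‖ = ‖A - C‖ := by rw [norm_sub_rev]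
  field_simp [nAB]
  rw [nAC]
  have hBA0 : ‖B - A‖ ≠ 0 := norm_ne_zero_iff.2 (sub_ne_zero.2 hAB.symm)
  have hAC0 : ‖A - C‖ ≠ 0 := norm_ne_zero_iff.2 (sub_ne_zero.2 hAC)
  rw [nAB]
  field_simp
  ring
end

section
/- Let A, B, C ∈ ℝ² be affinely independent points, and let u := (C − A)/‖C − A‖. Then the derivative at t = 0 of the function t ↦ dist(A, B + t·u) + dist(B + t·u, C) vanishes if and only if ∠(B, A, C) = ∠(B, C, A). -/
open EuclideanGeometry

open RealInnerProductSpace in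
private lemma hasDerivAt_norm_line {E : Type*} [NormedAddCommGroup E]
    [InnerProductSpace ℝ E] (v w : E) (hv : v ≠ 0) :
    HasDerivAt (fun t : ℝ => ‖v + t • w‖) (⟪v, w⟫ / ‖v‖) 0 := by
  have h1 : HasDerivAt (fun t : ℝ => v + t • w) w 0 := by
    simpa using ((hasDerivAt_id (0:ℝ)).smul_const w).const_add v
  have h2 : HasDerivAt (fun t : ℝ => ‖v + t • w‖ ^ 2) (2 * ⟪v, w⟫) 0 := by
    simpa using h1.norm_sq
  have hne : ‖v + (0:ℝ) • w‖ ^ 2 ≠ 0 := by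
    simpa using pow_ne_zero 2 (norm_ne_zero_iff.mpr hv)
  have h3 := (Real.hasDerivAt_sqrt hne).comp 0 h2
  have heq : (Real.sqrt ∘ fun t : ℝ => ‖v + t • w‖ ^ 2) = fun t : ℝ => ‖v + t • w‖ := by
    funext t
    simp [Function.comp, Real.sqrt_sq (norm_nonneg _)]
  rw [heq] at h3
  refine h3.congr_deriv ?_
  rw [zero_smul, add_zero]
  rw [Real.sqrt_sq (norm_nonneg _)]
  have : ‖v‖ ≠ 0 := norm_ne_zero_iff.mpr hv
  field_simp

/-- Stationarity characterization for the vertex-moving perturbation: the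
derivative at `t = 0` of the sum of the two adjacent side lengths vanishes iff
the two base angles over the diagonal `AC` are equal. -/
theorem vertex_moving_stationarity_iff
    (A B C : EuclideanSpace ℝ (Fin 2))
    (hindep : AffineIndependent ℝ ![A, B, C]) :
    deriv
      (fun t : ℝ =>
        dist A (B + t • (‖C - A‖⁻¹ • (C - A))) +
          dist (B + t • (‖C - A‖⁻¹ • (C - A))) C) 0 = 0 ↔
      ∠ B A C = ∠ B C A := by
  have hinj := hindep.injective
  have hAB : A ≠ B := fun h => by
    have := hinj (show ![A, B, C] 0 = ![A, B, C] 1 by simpa using h)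
    exact absurd this (by decide)
  have hBC : B ≠ C := fun h => by
    have := hinj (show ![A, B, C] 1 = ![A, B, C] 2 by simpa using h)
    exact absurd this (by decide)
  have hAC : A ≠ C := fun h => by
    have := hinj (show ![A, B, C] 0 = ![A, B, C] 2 by simpa using h)
    exact absurd this (by decide)
  set u : EuclideanSpace ℝ (Fin 2) := ‖C - A‖⁻¹ • (C - A) with hu
  have hBA : B - A ≠ 0 := sub_ne_zero.mpr hAB.symm
  have hBCv : B - C ≠ 0 := sub_ne_zero.mpr hBC
  have hCA : ‖C - A‖ ≠ 0 := norm_ne_zero_iff.mpr (sub_ne_zero.mpr hAC.symm)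
  have hnBA : ‖B - A‖ ≠ 0 := norm_ne_zero_iff.mpr hBA
  have hnBC : ‖B - C‖ ≠ 0 := norm_ne_zero_iff.mpr hBCv
  have hd1 : HasDerivAt (fun t : ℝ => dist A (B + t • u))
      (inner ℝ (B - A) u / ‖B - A‖) 0 := by
    have := hasDerivAt_norm_line (B - A) u hBA
    refine this.congr_deriv rfl |>.congr_of_eventuallyEq ?_
    filter_upwards with t
    rw [dist_eq_norm']
    congr 1
    abel
  have hd2 : HasDerivAt (fun t : ℝ => dist (B + t • u) C)
      (inner ℝ (B - C) u / ‖B - C‖) 0 := by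
    have := hasDerivAt_norm_line (B - C) u hBCv
    refine this.congr_deriv rfl |>.congr_of_eventuallyEq ?_
    filter_upwards with t
    rw [dist_eq_norm]
    congr 1
    abel
  have hd := (hd1.add hd2).deriv
  rw [show (fun t : ℝ => dist A (B + t • u) + dist (B + t • u) C) =
    ((fun t => dist A (B + t • u)) + fun t => dist (B + t • u) C) from rfl, hd]
  have e1 : (inner ℝ (B - A) u : ℝ) / ‖B - A‖ = Real.cos (∠ B A C) := by
    rw [EuclideanGeometry.angle, vsub_eq_sub, vsub_eq_sub, InnerProductGeometry.cos_angle,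
      hu, real_inner_smul_right]
    field_simp
  have e2 : (inner ℝ (B - C) u : ℝ) / ‖B - C‖ = -Real.cos (∠ B C A) := by
    rw [EuclideanGeometry.angle, vsub_eq_sub, vsub_eq_sub, InnerProductGeometry.cos_angle,
      hu, real_inner_smul_right]
    have h1 : (C : EuclideanSpace ℝ (Fin 2)) - A = -(A - C) := by abel
    rw [h1, inner_neg_right, norm_neg]
    field_simp
  rw [e1, e2]
  constructor
  · intro h
    have hcos : Real.cos (∠ B A C) = Real.cos (∠ B C A) := by linarith
    exact Real.injOn_cos ⟨angle_nonneg _ _ _, angle_le_pi _ _ _⟩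
      ⟨angle_nonneg _ _ _, angle_le_pi _ _ _⟩ hcos
  · intro h
    rw [h]
    ring
end
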